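/- The SLOCC orbit of GHZ is dense in the three-qubit Hilbert space: the closure (in the unique Hausdorff vector-space topology on the finite-dimensional space ℂ² ⊗ ℂ² ⊗ ℂ²) of the set of tensors SLOCC-equivalent to GHZ = e₀⊗e₀⊗e₀ + e₁⊗e₁⊗e₁ is all of ℂ² ⊗ ℂ² ⊗ ℂ². (The secant variety of the Segre variety ℙ¹×ℙ¹×ℙ¹ fills the ambient space ℙ⁷.) -/

import Mathlib

open TensorProduct

noncomputable section

/-- The single-qubit space ℂ². -/
abbrev Qubit : Type := Fin 2 → ℂ

/-- The three-qubit Hilbert space ℂ² ⊗ ℂ² ⊗ ℂ². -/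
abbrev ThreeQubit : Type := Qubit ⊗[ℂ] (Qubit ⊗[ℂ] Qubit)

/-- Standard basis vector e₀ of ℂ². -/
def e0 : Qubit := ![1, 0]

/-- Standard basis vector e₁ of ℂ². -/
def e1 : Qubit := ![0, 1]

/-- SLOCC equivalence: ψ and φ are related by invertible local linear maps. -/
def SLOCC (ψ φ : ThreeQubit) : Prop :=
  ∃ g₁ g₂ g₃ : Qubit ≃ₗ[ℂ] Qubit,
    TensorProduct.map g₁.toLinearMap
      (TensorProduct.map g₂.toLinearMap g₃.toLinearMap) ψ = φ

def SepState : ThreeQubit := e0 ⊗ₜ[ℂ] (e0 ⊗ₜ[ℂ] e0)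
def B1 : ThreeQubit := e0 ⊗ₜ[ℂ] (e0 ⊗ₜ[ℂ] e0) + e0 ⊗ₜ[ℂ] (e1 ⊗ₜ[ℂ] e1)
def B2 : ThreeQubit := e0 ⊗ₜ[ℂ] (e0 ⊗ₜ[ℂ] e0) + e1 ⊗ₜ[ℂ] (e0 ⊗ₜ[ℂ] e1)
def B3 : ThreeQubit := e0 ⊗ₜ[ℂ] (e0 ⊗ₜ[ℂ] e0) + e1 ⊗ₜ[ℂ] (e1 ⊗ₜ[ℂ] e0)
def W : ThreeQubit := e1 ⊗ₜ[ℂ] (e0 ⊗ₜ[ℂ] e0) + e0 ⊗ₜ[ℂ] (e1 ⊗ₜ[ℂ] e0) + e0 ⊗ₜ[ℂ] (e0 ⊗ₜ[ℂ] e1)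
def GHZ : ThreeQubit := e0 ⊗ₜ[ℂ] (e0 ⊗ₜ[ℂ] e0) + e1 ⊗ₜ[ℂ] (e1 ⊗ₜ[ℂ] e1)

/-- The standard basis e_i ⊗ e_j ⊗ e_k of the three-qubit space. -/
def stdBasis : Module.Basis (Fin 2 × Fin 2 × Fin 2) ℂ ThreeQubit :=
  (Pi.basisFun ℂ (Fin 2)).tensorProduct
    ((Pi.basisFun ℂ (Fin 2)).tensorProduct (Pi.basisFun ℂ (Fin 2)))

/-- The standard (unique Hausdorff vector-space) topology on the finite-dimensional space
ℂ²⊗ℂ²⊗ℂ², induced from the coordinate norm. -/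
instance : NormedAddCommGroup ThreeQubit :=
  NormedAddCommGroup.induced ThreeQubit (Fin 2 × Fin 2 × Fin 2 → ℂ)
    stdBasis.equivFun.toLinearMap stdBasis.equivFun.injective

instance : NormedSpace ℂ ThreeQubit :=
  NormedSpace.induced ℂ ThreeQubit (Fin 2 × Fin 2 × Fin 2 → ℂ) stdBasis.equivFun.toLinearMap

section Auxiliary

open Polynomial

/-- Build a linear automorphism of `Qubit` sending a given independent pair to `e0, e1`. -/
lemma exists_equiv (x y : Qubit) (h : x 0 * y 1 - x 1 * y 0 ≠ 0) :
    ∃ f : Qubit ≃ₗ[ℂ] Qubit, f x = e0 ∧ f y = e1 := by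
  set Δ := x 0 * y 1 - x 1 * y 0 with hΔ
  let A : Matrix (Fin 2) (Fin 2) ℂ := !![y 1 / Δ, -(y 0) / Δ; -(x 1) / Δ, x 0 / Δ]
  let B : Matrix (Fin 2) (Fin 2) ℂ := !![x 0, y 0; x 1, y 1]
  have hAB : A * B = 1 := by
    ext i j
    fin_cases i <;> fin_cases j <;>
      simp [A, B, Matrix.mul_apply, Fin.sum_univ_two] <;> field_simp <;> ring
  have hBA : B * A = 1 := by
    ext i j
    fin_cases i <;> fin_cases j <;>
      simp [A, B, Matrix.mul_apply, Fin.sum_univ_two] <;> field_simp <;> ring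
  refine ⟨LinearEquiv.ofLinear (Matrix.toLin' A) (Matrix.toLin' B) ?_ ?_, ?_, ?_⟩
  · rw [← Matrix.toLin'_mul, hAB, Matrix.toLin'_one]
  · rw [← Matrix.toLin'_mul, hBA, Matrix.toLin'_one]
  · show Matrix.toLin' A x = e0
    funext i
    fin_cases i <;>
      simp [A, e0, Matrix.toLin'_apply, Matrix.mulVec, dotProduct, Fin.sum_univ_two] <;>
      field_simp <;> ring
  · show Matrix.toLin' A y = e1
    funext i
    fin_cases i <;>
      simp [A, e1, Matrix.toLin'_apply, Matrix.mulVec, dotProduct, Fin.sum_univ_two] <;>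
      field_simp <;> ring

/-- A sum of two decomposable tensors with independent pairs in each factor is
SLOCC-equivalent to GHZ. -/
lemma slocc_of_pairs (a a' b b' c c' : Qubit)
    (ha : a 0 * a' 1 - a 1 * a' 0 ≠ 0)
    (hb : b 0 * b' 1 - b 1 * b' 0 ≠ 0)
    (hc : c 0 * c' 1 - c 1 * c' 0 ≠ 0) :
    SLOCC (a ⊗ₜ[ℂ] (b ⊗ₜ[ℂ] c) + a' ⊗ₜ[ℂ] (b' ⊗ₜ[ℂ] c')) GHZ := by
  obtain ⟨f₁, hf₁, hf₁'⟩ := exists_equiv a a' ha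
  obtain ⟨f₂, hf₂, hf₂'⟩ := exists_equiv b b' hb
  obtain ⟨f₃, hf₃, hf₃'⟩ := exists_equiv c c' hc
  exact ⟨f₁, f₂, f₃, by simp [TensorProduct.map_tmul, hf₁, hf₁', hf₂, hf₂', hf₃, hf₃', GHZ]⟩

/-- Rank-one factorization of a singular 2×2 matrix. -/
lemma rank_one (A00 A01 A10 A11 : ℂ) (hdet : A00 * A11 = A01 * A10) :
    ∃ u0 u1 v0 v1 : ℂ, A00 = u0*v0 ∧ A01 = u0*v1 ∧ A10 = u1*v0 ∧ A11 = u1*v1 := by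
  by_cases h00 : A00 = 0
  · by_cases h01 : A01 = 0
    · exact ⟨0, 1, A10, A11, by simp [h00], by simp [h01], by ring, by ring⟩
    · have h10 : A10 = 0 := by
        have h := hdet; rw [h00, zero_mul] at h
        rcases mul_eq_zero.mp h.symm with h' | h'
        · exact absurd h' h01
        · exact h'
      exact ⟨A01, A11, 0, 1, by simp [h00], by ring, by simp [h10], by ring⟩
  · refine ⟨A00, A10, 1, A01 / A00, by ring, by field_simp, by ring, ?_⟩
    field_simp
    linear_combination hdet

/-- Any three-qubit tensor whose matrix pencil is generic lies in the GHZ SLOCC orbit. -/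
lemma generic_slocc (a b c d p q r s : ℂ)
    (h₁ : p * s - q * r ≠ 0)
    (h₂ : (a*s - b*r - c*q + d*p)^2 - 4*(a*d - b*c)*(p*s - q*r) ≠ 0) :
    SLOCC (a • (e0 ⊗ₜ[ℂ] (e0 ⊗ₜ[ℂ] e0)) + b • (e0 ⊗ₜ[ℂ] (e0 ⊗ₜ[ℂ] e1))
      + c • (e0 ⊗ₜ[ℂ] (e1 ⊗ₜ[ℂ] e0)) + d • (e0 ⊗ₜ[ℂ] (e1 ⊗ₜ[ℂ] e1))
      + p • (e1 ⊗ₜ[ℂ] (e0 ⊗ₜ[ℂ] e0)) + q • (e1 ⊗ₜ[ℂ] (e0 ⊗ₜ[ℂ] e1))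
      + r • (e1 ⊗ₜ[ℂ] (e1 ⊗ₜ[ℂ] e0)) + s • (e1 ⊗ₜ[ℂ] (e1 ⊗ₜ[ℂ] e1))) GHZ := by
  obtain ⟨σ, hσ⟩ : ∃ z : ℂ, z ^ 2 = (a*s - b*r - c*q + d*p)^2 - 4*(a*d - b*c)*(p*s - q*r) :=
    IsAlgClosed.exists_pow_nat_eq _ (by norm_num)
  have hσ0 : σ ≠ 0 := by
    intro h; rw [h] at hσ; exact h₂ (by simpa using hσ.symm)
  have hk : 4*(p*s-q*r)*σ ≠ 0 :=
    mul_ne_zero (mul_ne_zero (by norm_num) h₁) hσ0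
  have hdetN : (2*(p*s-q*r)*a - ((a*s-b*r-c*q+d*p) + σ)*p)
        * (2*(p*s-q*r)*d - ((a*s-b*r-c*q+d*p) + σ)*s)
      = (2*(p*s-q*r)*b - ((a*s-b*r-c*q+d*p) + σ)*q)
        * (2*(p*s-q*r)*c - ((a*s-b*r-c*q+d*p) + σ)*r) := by
    linear_combination (p*s-q*r) * hσ
  have hdetM : (2*(p*s-q*r)*a - ((a*s-b*r-c*q+d*p) - σ)*p)
        * (2*(p*s-q*r)*d - ((a*s-b*r-c*q+d*p) - σ)*s)
      = (2*(p*s-q*r)*b - ((a*s-b*r-c*q+d*p) - σ)*q)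
        * (2*(p*s-q*r)*c - ((a*s-b*r-c*q+d*p) - σ)*r) := by
    linear_combination (p*s-q*r) * hσ
  obtain ⟨u0, u1, v0, v1, hn00, hn01, hn10, hn11⟩ := rank_one _ _ _ _ hdetN
  obtain ⟨w0, w1, x0, x1, hm00, hm01, hm10, hm11⟩ := rank_one _ _ _ _ hdetM
  have e00 : u0*v0 - w0*x0 = -(2*σ*p) := by linear_combination hm00 - hn00
  have e01 : u0*v1 - w0*x1 = -(2*σ*q) := by linear_combination hm01 - hn01
  have e10 : u1*v0 - w1*x0 = -(2*σ*r) := by linear_combination hm10 - hn10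
  have e11 : u1*v1 - w1*x1 = -(2*σ*s) := by linear_combination hm11 - hn11
  have key : (u0*w1 - u1*w0) * (v0*x1 - v1*x0)
      = -((u0*v0 - w0*x0) * (u1*v1 - w1*x1) - (u0*v1 - w0*x1) * (u1*v0 - w1*x0)) := by
    ring
  rw [e00, e01, e10, e11] at key
  have hkey : (u0*w1 - u1*w0) * (v0*x1 - v1*x0) ≠ 0 := by
    rw [key, show -((-(2*σ*p))*(-(2*σ*s)) - (-(2*σ*q))*(-(2*σ*r))) = -(4*σ^2*(p*s-q*r)) by ring]
    exact neg_ne_zero.mpr (mul_ne_zero (mul_ne_zero (by norm_num) (pow_ne_zero 2 hσ0)) h₁)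
  have hwu : u0*w1 - u1*w0 ≠ 0 := (mul_ne_zero_iff.mp hkey).1
  have hwv : v0*x1 - v1*x0 ≠ 0 := (mul_ne_zero_iff.mp hkey).2
  have hψs : (4*(p*s-q*r)*σ) • (a • (e0 ⊗ₜ[ℂ] (e0 ⊗ₜ[ℂ] e0)) + b • (e0 ⊗ₜ[ℂ] (e0 ⊗ₜ[ℂ] e1))
      + c • (e0 ⊗ₜ[ℂ] (e1 ⊗ₜ[ℂ] e0)) + d • (e0 ⊗ₜ[ℂ] (e1 ⊗ₜ[ℂ] e1))
      + p • (e1 ⊗ₜ[ℂ] (e0 ⊗ₜ[ℂ] e0)) + q • (e1 ⊗ₜ[ℂ] (e0 ⊗ₜ[ℂ] e1))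
      + r • (e1 ⊗ₜ[ℂ] (e1 ⊗ₜ[ℂ] e0)) + s • (e1 ⊗ₜ[ℂ] (e1 ⊗ₜ[ℂ] e1)))
      = ((-((a*s-b*r-c*q+d*p) - σ)) • e0 + (-(2*(p*s-q*r))) • e1) ⊗ₜ[ℂ]
          ((u0 • e0 + u1 • e1) ⊗ₜ[ℂ] (v0 • e0 + v1 • e1))
        + (((a*s-b*r-c*q+d*p) + σ) • e0 + (2*(p*s-q*r)) • e1) ⊗ₜ[ℂ]
          ((w0 • e0 + w1 • e1) ⊗ₜ[ℂ] (x0 • e0 + x1 • e1)) := by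
    simp only [tmul_add, add_tmul, smul_tmul, tmul_smul, smul_smul, smul_add]
    match_scalars
    · linear_combination (-((a*s-b*r-c*q+d*p) - σ))*hn00 + ((a*s-b*r-c*q+d*p) + σ)*hm00
    · linear_combination (-((a*s-b*r-c*q+d*p) - σ))*hn01 + ((a*s-b*r-c*q+d*p) + σ)*hm01
    · linear_combination (-((a*s-b*r-c*q+d*p) - σ))*hn10 + ((a*s-b*r-c*q+d*p) + σ)*hm10
    · linear_combination (-((a*s-b*r-c*q+d*p) - σ))*hn11 + ((a*s-b*r-c*q+d*p) + σ)*hm11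
    · linear_combination (-(2*(p*s-q*r)))*hn00 + (2*(p*s-q*r))*hm00
    · linear_combination (-(2*(p*s-q*r)))*hn01 + (2*(p*s-q*r))*hm01
    · linear_combination (-(2*(p*s-q*r)))*hn10 + (2*(p*s-q*r))*hm10
    · linear_combination (-(2*(p*s-q*r)))*hn11 + (2*(p*s-q*r))*hm11
  have h2 : (a • (e0 ⊗ₜ[ℂ] (e0 ⊗ₜ[ℂ] e0)) + b • (e0 ⊗ₜ[ℂ] (e0 ⊗ₜ[ℂ] e1))
      + c • (e0 ⊗ₜ[ℂ] (e1 ⊗ₜ[ℂ] e0)) + d • (e0 ⊗ₜ[ℂ] (e1 ⊗ₜ[ℂ] e1))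
      + p • (e1 ⊗ₜ[ℂ] (e0 ⊗ₜ[ℂ] e0)) + q • (e1 ⊗ₜ[ℂ] (e0 ⊗ₜ[ℂ] e1))
      + r • (e1 ⊗ₜ[ℂ] (e1 ⊗ₜ[ℂ] e0)) + s • (e1 ⊗ₜ[ℂ] (e1 ⊗ₜ[ℂ] e1)))
      = (4*(p*s-q*r)*σ)⁻¹ • (((-((a*s-b*r-c*q+d*p) - σ)) • e0 + (-(2*(p*s-q*r))) • e1) ⊗ₜ[ℂ]
          ((u0 • e0 + u1 • e1) ⊗ₜ[ℂ] (v0 • e0 + v1 • e1))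
        + (((a*s-b*r-c*q+d*p) + σ) • e0 + (2*(p*s-q*r)) • e1) ⊗ₜ[ℂ]
          ((w0 • e0 + w1 • e1) ⊗ₜ[ℂ] (x0 • e0 + x1 • e1))) := by
    rw [← hψs, smul_smul, inv_mul_cancel₀ hk, one_smul]
  rw [h2]
  simp only [smul_add, smul_tmul']
  apply slocc_of_pairs
  · simp only [Pi.smul_apply, Pi.add_apply, smul_eq_mul, e0, e1,
      Matrix.cons_val_zero, Matrix.cons_val_one, Matrix.head_cons,
      mul_one, mul_zero, add_zero, zero_add]
    intro h
    have h3 := congrArg (fun z => (4*(p*s-q*r)*σ) * ((4*(p*s-q*r)*σ) * z)) h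
    simp only [mul_zero] at h3
    field_simp at h3
    exact hk (pow_eq_zero_iff (n := 3) (by norm_num) |>.mp (by linear_combination ((4*(p*s-q*r)*σ)^2) * h3))
  · simpa [e0, e1] using hwu
  · simpa [e0, e1] using hwv

lemma pi_basisFun_zero : Pi.basisFun ℂ (Fin 2) 0 = e0 := by
  funext i; fin_cases i <;> simp [e0, Pi.basisFun_apply]

lemma pi_basisFun_one : Pi.basisFun ℂ (Fin 2) 1 = e1 := by
  funext i; fin_cases i <;> simp [e1, Pi.basisFun_apply]

lemma stdBasis_apply (i j k : Fin 2) :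
    stdBasis (i, j, k) = (Pi.basisFun ℂ (Fin 2) i) ⊗ₜ[ℂ]
      ((Pi.basisFun ℂ (Fin 2) j) ⊗ₜ[ℂ] (Pi.basisFun ℂ (Fin 2) k)) := by
  simp [stdBasis, Module.Basis.tensorProduct_apply]

/-- A nonzero polynomial has nonroots arbitrarily close to `0`. -/
lemma exists_small_nonroot (R : Polynomial ℂ) (hR : R ≠ 0) {δ : ℝ} (hδ : 0 < δ) :
    ∃ ε : ℂ, ε ≠ 0 ∧ ‖ε‖ < δ ∧ ¬ R.IsRoot ε := by
  have hfin : {z : ℂ | R.IsRoot z}.Finite := R.finite_setOf_isRoot hR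
  have hinf : ((fun x : ℝ => (x : ℂ)) '' Set.Ioo 0 δ).Infinite :=
    (Set.Ioo_infinite hδ).image (Complex.ofReal_injective.injOn)
  obtain ⟨ε, hε⟩ := (hinf.diff hfin).nonempty
  obtain ⟨⟨x, hx, rfl⟩, hroot⟩ := hε
  exact ⟨x, by exact_mod_cast ne_of_gt hx.1, by
    rw [Complex.norm_real]; rw [Real.norm_eq_abs, abs_of_pos hx.1]; exact hx.2, hroot⟩

end Auxiliary

open Polynomial in

open Polynomial in
/-- The GHZ SLOCC orbit is dense in the three-qubit Hilbert space:
the secant variety of the Segre variety fills the ambient space. -/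
theorem GHZ_orbit_dense :
    Dense {ψ : ThreeQubit | SLOCC ψ GHZ} := by
  rw [Metric.dense_iff]
  intro ψ δ hδ
  obtain ⟨a, ha⟩ : ∃ x, stdBasis.repr ψ (0,0,0) = x := ⟨_, rfl⟩
  obtain ⟨b, hb⟩ : ∃ x, stdBasis.repr ψ (0,0,1) = x := ⟨_, rfl⟩
  obtain ⟨c, hc⟩ : ∃ x, stdBasis.repr ψ (0,1,0) = x := ⟨_, rfl⟩
  obtain ⟨d, hd⟩ : ∃ x, stdBasis.repr ψ (0,1,1) = x := ⟨_, rfl⟩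
  obtain ⟨p, hp⟩ : ∃ x, stdBasis.repr ψ (1,0,0) = x := ⟨_, rfl⟩
  obtain ⟨q, hq⟩ : ∃ x, stdBasis.repr ψ (1,0,1) = x := ⟨_, rfl⟩
  obtain ⟨r, hr⟩ : ∃ x, stdBasis.repr ψ (1,1,0) = x := ⟨_, rfl⟩
  obtain ⟨s, hs⟩ : ∃ x, stdBasis.repr ψ (1,1,1) = x := ⟨_, rfl⟩
  have hψ : ψ = a • stdBasis (0,0,0) + b • stdBasis (0,0,1) + c • stdBasis (0,1,0)
      + d • stdBasis (0,1,1) + p • stdBasis (1,0,0) + q • stdBasis (1,0,1)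
      + r • stdBasis (1,1,0) + s • stdBasis (1,1,1) := by
    rw [← ha, ← hb, ← hc, ← hd, ← hp, ← hq, ← hr, ← hs]
    conv_lhs => rw [← stdBasis.sum_repr ψ]
    simp only [Fintype.sum_prod_type, Fin.sum_univ_two]
    module
  obtain ⟨η, hη⟩ : ∃ x : ThreeQubit,
      x = stdBasis (0,0,0) - stdBasis (0,1,1) + stdBasis (1,0,0) + stdBasis (1,1,1) := ⟨_, rfl⟩
  set P1 : Polynomial ℂ := X^2 + C (p+s) * X + C (p*s - q*r) with hP1def
  set Q : Polynomial ℂ := C ((a*s-b*r-c*q+d*p)^2 - 4*(a*d-b*c)*(p*s-q*r))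
     + C (2*(a*s-b*r-c*q+d*p)*(a+s+d-p) - 4*((d-a)*(p*s-q*r) + (a*d-b*c)*(p+s))) * X
     + C ((a+s+d-p)^2 - 4*((d-a)*(p+s) - (p*s-q*r) + (a*d-b*c))) * X^2
     + C (4*((p+s) - (d-a))) * X^3 + C 4 * X^4 with hQdef
  have hP1c : P1.coeff 2 = 1 := by
    rw [hP1def]
    simp only [coeff_add, coeff_C_mul, coeff_X_pow, coeff_C, Polynomial.coeff_X]
    norm_num
  have hQc : Q.coeff 4 = 4 := by
    rw [hQdef]
    simp only [coeff_add, coeff_C_mul, coeff_X_pow, coeff_C, Polynomial.coeff_X]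
    norm_num
  have hP1 : P1 ≠ 0 := fun h => by
    rw [h, coeff_zero] at hP1c; exact (by norm_num : (0:ℂ) ≠ 1) hP1c
  have hQ : Q ≠ 0 := fun h => by
    rw [h, coeff_zero] at hQc; exact (by norm_num : (0:ℂ) ≠ 4) hQc
  have hR : P1 * Q ≠ 0 := mul_ne_zero hP1 hQ
  have hδ' : 0 < δ / (‖η‖ + 1) := by positivity
  obtain ⟨ε, hε0, hεδ, hεroot⟩ := exists_small_nonroot (P1 * Q) hR hδ'
  have hεval : P1.eval ε * Q.eval ε ≠ 0 := by
    rw [← eval_mul]; exact hεroot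
  have hP1ε : P1.eval ε ≠ 0 := (mul_ne_zero_iff.mp hεval).1
  have hQε : Q.eval ε ≠ 0 := (mul_ne_zero_iff.mp hεval).2
  have h₁' : (p+ε)*(s+ε) - q*r ≠ 0 := by
    rw [show (p+ε)*(s+ε) - q*r = P1.eval ε by simp [hP1def]; ring]
    exact hP1ε
  have h₂' : ((a+ε)*(s+ε) - b*r - c*q + (d-ε)*(p+ε))^2
      - 4*((a+ε)*(d-ε) - b*c)*((p+ε)*(s+ε) - q*r) ≠ 0 := by
    rw [show ((a+ε)*(s+ε) - b*r - c*q + (d-ε)*(p+ε))^2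
      - 4*((a+ε)*(d-ε) - b*c)*((p+ε)*(s+ε) - q*r) = Q.eval ε by simp [hQdef]; ring]
    exact hQε
  have hslocc := generic_slocc (a+ε) b c (d-ε) (p+ε) q r (s+ε) h₁' h₂'
  have hφ : ψ + ε • η = (a+ε) • (e0 ⊗ₜ[ℂ] (e0 ⊗ₜ[ℂ] e0)) + b • (e0 ⊗ₜ[ℂ] (e0 ⊗ₜ[ℂ] e1))
      + c • (e0 ⊗ₜ[ℂ] (e1 ⊗ₜ[ℂ] e0)) + (d-ε) • (e0 ⊗ₜ[ℂ] (e1 ⊗ₜ[ℂ] e1))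
      + (p+ε) • (e1 ⊗ₜ[ℂ] (e0 ⊗ₜ[ℂ] e0)) + q • (e1 ⊗ₜ[ℂ] (e0 ⊗ₜ[ℂ] e1))
      + r • (e1 ⊗ₜ[ℂ] (e1 ⊗ₜ[ℂ] e0)) + (s+ε) • (e1 ⊗ₜ[ℂ] (e1 ⊗ₜ[ℂ] e1)) := by
    rw [hψ, hη]
    simp only [stdBasis_apply, pi_basisFun_zero, pi_basisFun_one]
    module
  refine ⟨ψ + ε • η, Metric.mem_ball.mpr ?_, ?_⟩
  · rw [dist_eq_norm, add_sub_cancel_left, norm_smul]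
    have hpos : (0:ℝ) < ‖η‖ + 1 := by positivity
    calc ‖ε‖ * ‖η‖ ≤ ‖ε‖ * (‖η‖ + 1) := by nlinarith [norm_nonneg ε]
    _ < δ := (lt_div_iff₀ hpos).mp hεδ
  · show SLOCC (ψ + ε • η) GHZ
    rw [hφ]
    exact hslocc

end
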